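/- Safety probabilities are the greatest fixpoint of the safety operator: Let (S, P) be a Markov chain on a countable state space S and let T ⊆ S. Define the operator 𝒮 : [0,1]^S → [0,1]^S by 𝒮(x)(s) = 0 if s ∈ T and 𝒮(x)(s) = Σ_{s'} P(s,s')·x(s') otherwise. Then 𝒮 is monotone on the complete lattice [0,1]^S (ordered pointwise), and the function w(s) = P_s(Safe(T)) = 1 − P_s(Reach(T)) is the greatest fixpoint of 𝒮. -/
import Mathlib


open scoped Classical

/-- A Markov chain on a state space `S`: a transition function whose rows are
probability distributions. -/
structure MC (S : Type) where
  P : S → S → ℝ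
  nonneg : ∀ s s', 0 ≤ P s s'
  sum_one : ∀ s, HasSum (P s) 1

/-- Probability of reaching `T` from `s` within `k` steps. -/
noncomputable def MC.reachAux {S : Type} (M : MC S) (T : Set S) : ℕ → S → ℝ
  | 0, s => if s ∈ T then 1 else 0
  | k + 1, s => if s ∈ T then 1 else ∑' s', M.P s s' * M.reachAux T k s'

/-- `P_s(Reach T)`: the probability (under the path measure of the Markov chain
started at `s`) of the set of infinite paths that eventually visit `T`, obtained as
the supremum of the step-bounded reachability probabilities. -/
noncomputable def MC.PReach {S : Type} (M : MC S) (T : Set S) (s : S) : ℝ :=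
  ⨆ k : ℕ, M.reachAux T k s

/-- The safety operator `𝒮` for avoiding `T`:
`𝒮(x)(s) = 0` if `s ∈ T` and `𝒮(x)(s) = Σ_{s'} P(s,s')·x(s')` otherwise. -/
noncomputable def MC.safeOp {S : Type} (M : MC S) (T : Set S) (x : S → ℝ) : S → ℝ :=
  fun s => if s ∈ T then 0 else ∑' s', M.P s s' * x s'

namespace MCaux

variable {S : Type} (M : MC S) (T : Set S)

lemma psummable (s : S) : Summable (M.P s) := (M.sum_one s).summable

lemma ptsum (s : S) : ∑' s', M.P s s' = 1 := (M.sum_one s).tsum_eq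

lemma summable_mul {x : S → ℝ} (hx : ∀ s, x s ∈ Set.Icc (0:ℝ) 1) (s : S) :
    Summable (fun s' => M.P s s' * x s') := by
  refine Summable.of_nonneg_of_le (fun s' => mul_nonneg (M.nonneg s s') (hx s').1)
    (fun s' => ?_) (psummable M s)
  nlinarith [(hx s').2, M.nonneg s s']

lemma reachAux_mem (k : ℕ) (s : S) : M.reachAux T k s ∈ Set.Icc (0:ℝ) 1 := by
  induction k generalizing s with
  | zero => simp only [MC.reachAux]; split <;> norm_num
  | succ k ih =>
    simp only [MC.reachAux]
    split
    · norm_num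
    · constructor
      · exact tsum_nonneg fun s' => mul_nonneg (M.nonneg s s') (ih s').1
      · calc ∑' s', M.P s s' * M.reachAux T k s' ≤ ∑' s', M.P s s' :=
              Summable.tsum_le_tsum (fun s' => by nlinarith [(ih s').2, M.nonneg s s'])
                (summable_mul M ih s) (psummable M s)
          _ = 1 := ptsum M s

lemma reachAux_mono : Monotone (fun k => M.reachAux T k) := by
  refine monotone_nat_of_le_succ fun k => ?_
  induction k with
  | zero =>
    intro s
    simp only [MC.reachAux]
    split
    · exact le_rfl
    · exact tsum_nonneg fun s' => mul_nonneg (M.nonneg s s') (by split <;> norm_num)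
  | succ k ih =>
    intro s
    simp only [MC.reachAux]
    split
    · exact le_rfl
    · exact Summable.tsum_le_tsum (fun s' => mul_le_mul_of_nonneg_left (ih s') (M.nonneg s s'))
        (summable_mul M (reachAux_mem M T k) s) (summable_mul M (reachAux_mem M T (k+1)) s)

lemma bddAbove_range (s : S) : BddAbove (Set.range fun k => M.reachAux T k s) :=
  ⟨1, fun _ ⟨k, hk⟩ => hk ▸ (reachAux_mem M T k s).2⟩

lemma PReach_mem (s : S) : M.PReach T s ∈ Set.Icc (0:ℝ) 1 := by
  constructor
  · exact le_ciSup_of_le (bddAbove_range M T s) 0 (reachAux_mem M T 0 s).1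
  · exact ciSup_le fun k => (reachAux_mem M T k s).2

lemma tendsto_reachAux (s : S) :
    Filter.Tendsto (fun k => M.reachAux T k s) Filter.atTop (nhds (M.PReach T s)) :=
  tendsto_atTop_ciSup (fun a b hab => reachAux_mono M T hab s) (bddAbove_range M T s)

/-- Key MCT step. -/
lemma tsum_PReach {s : S} (hT : s ∉ T) :
    ∑' s', M.P s s' * M.PReach T s' = M.PReach T s := by
  have h1 : Filter.Tendsto (fun k => ∑' s', M.P s s' * M.reachAux T k s') Filter.atTop
      (nhds (∑' s', M.P s s' * M.PReach T s')) := by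
    refine tendsto_tsum_of_dominated_convergence (psummable M s)
      (fun s' => (Filter.Tendsto.const_mul _ (tendsto_reachAux M T s'))) ?_
    refine Filter.Eventually.of_forall fun k s' => ?_
    rw [Real.norm_eq_abs, abs_of_nonneg (mul_nonneg (M.nonneg s s') (reachAux_mem M T k s').1)]
    nlinarith [(reachAux_mem M T k s').2, M.nonneg s s']
  have h2 : Filter.Tendsto (fun k => ∑' s', M.P s s' * M.reachAux T k s') Filter.atTop
      (nhds (M.PReach T s)) := by
    have hs : Filter.Tendsto (fun k => M.reachAux T (k+1) s) Filter.atTop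
        (nhds (M.PReach T s)) := (tendsto_reachAux M T s).comp (Filter.tendsto_add_atTop_nat 1)
    have heq : ∀ k, M.reachAux T (k+1) s = ∑' s', M.P s s' * M.reachAux T k s' := fun k => by
      simp [MC.reachAux, hT]
    exact hs.congr fun k => heq k
  exact tendsto_nhds_unique h1 h2

end MCaux

/-- **Safety probabilities are the greatest fixpoint of the safety operator.**
For a Markov chain on a countable state space `S` and `T ⊆ S`, the operator `𝒮` is
monotone on the complete lattice `[0,1]^S` (ordered pointwise), the function
`w(s) = P_s(Safe T) = 1 − P_s(Reach T)` is `[0,1]`-valued and is a fixpoint of `𝒮`,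
and it is above every `[0,1]`-valued fixpoint of `𝒮`. -/
theorem safe_prob_greatest_fixpoint {S : Type} [Countable S] (M : MC S) (T : Set S) :
    (∀ x y : S → ℝ, (∀ s, x s ∈ Set.Icc (0 : ℝ) 1) → (∀ s, y s ∈ Set.Icc (0 : ℝ) 1) →
      x ≤ y → M.safeOp T x ≤ M.safeOp T y) ∧
    (∀ s, (1 - M.PReach T s) ∈ Set.Icc (0 : ℝ) 1) ∧
    M.safeOp T (fun s => 1 - M.PReach T s) = (fun s => 1 - M.PReach T s) ∧
    (∀ x : S → ℝ, (∀ s, x s ∈ Set.Icc (0 : ℝ) 1) → M.safeOp T x = x →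
      x ≤ fun s => 1 - M.PReach T s) := by
  have hw : ∀ s, (1 - M.PReach T s) ∈ Set.Icc (0:ℝ) 1 := fun s => by
    have := MCaux.PReach_mem M T s
    constructor <;> [linarith [this.2]; linarith [this.1]]
  refine ⟨?_, hw, ?_, ?_⟩
  · intro x y hx hy hxy s
    simp only [MC.safeOp]
    split
    · exact le_rfl
    · exact Summable.tsum_le_tsum (fun s' => mul_le_mul_of_nonneg_left (hxy s') (M.nonneg s s'))
        (MCaux.summable_mul M hx s) (MCaux.summable_mul M hy s)
  · funext s
    simp only [MC.safeOp]
    split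
    · -- s ∈ T : PReach = 1
      rename_i hT
      have h1 : ∀ k, M.reachAux T k s = 1 := fun k => by cases k <;> simp [MC.reachAux, hT]
      have : M.PReach T s = 1 := by
        unfold MC.PReach
        simp only [h1]
        exact ciSup_const
      rw [this]; ring
    · rename_i hT
      have hsub : ∑' s', M.P s s' * (1 - M.PReach T s')
          = ∑' s', (M.P s s' - M.P s s' * M.PReach T s') := by
        congr 1; funext s'; ring
      rw [hsub, Summable.tsum_sub (MCaux.psummable M s)
        (MCaux.summable_mul M (MCaux.PReach_mem M T) s), MCaux.ptsum M s,
        MCaux.tsum_PReach M T hT]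
  · intro x hx hfix s
    have hxT : ∀ t ∈ T, x t = 0 := fun t ht => by
      rw [← hfix]; simp [MC.safeOp, ht]
    have key : ∀ k s, M.reachAux T k s ≤ 1 - x s := by
      intro k
      induction k with
      | zero =>
        intro s
        by_cases hT : s ∈ T
        · simp [MC.reachAux, hT, hxT s hT]
        · simp only [MC.reachAux, if_neg hT]
          linarith [(hx s).2]
      | succ k ih =>
        intro s
        by_cases hT : s ∈ T
        · simp [MC.reachAux, hT, hxT s hT]
        · simp only [MC.reachAux, if_neg hT]
          have h1 : ∑' s', M.P s s' * M.reachAux T k s' ≤ ∑' s', M.P s s' * (1 - x s') :=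
            Summable.tsum_le_tsum (fun s' => mul_le_mul_of_nonneg_left (ih s') (M.nonneg s s'))
              (MCaux.summable_mul M (MCaux.reachAux_mem M T k) s)
              (MCaux.summable_mul M (fun t => ⟨by linarith [(hx t).2], by linarith [(hx t).1]⟩) s)
          have h2 : ∑' s', M.P s s' * (1 - x s') = 1 - x s := by
            have hsub : ∑' s', M.P s s' * (1 - x s')
                = ∑' s', (M.P s s' - M.P s s' * x s') := by
              congr 1; funext s'; ring
            rw [hsub, Summable.tsum_sub (MCaux.psummable M s) (MCaux.summable_mul M hx s),
              MCaux.ptsum M s]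
            have : ∑' s', M.P s s' * x s' = x s := by
              conv_rhs => rw [← hfix]
              simp [MC.safeOp, hT]
            rw [this]
          linarith
    have : M.PReach T s ≤ 1 - x s := ciSup_le fun k => key k s
    show x s ≤ 1 - M.PReach T s
    linarith
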